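/- Let ρ, ρ̂ ∈ (0,1) with ρ̂ > ρ, let C, Ĉ > 0 and α, β, α̂, β̂ ∈ ℝ. Let U, Û be locally finite Borel measures on [0,∞) and L, L̂ be slowly varying at 0⁺ with U([0,x])/(x^ρ L(x)) → 1 and Û([0,x])/(x^{ρ̂} L̂(x)) → 1 as x → 0⁺. Define Ψ(x) := C ∫_{[0,x]} e^{(α−β)y} U(dy) and Ψ̂(x) := Ĉ ∫_{[0,x]} e^{(α̂−β̂)y} Û(dy). Then (Ψ(x) − Ψ̂(x))/(x^{ρ̂} L̂(x)) → +∞ as x → 0⁺. -/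

import Mathlib

open Filter Topology MeasureTheory Set

/-- A function `L : (0,∞) → (0,∞)` is slowly varying at `0⁺` if for every `l > 0`,
`L(l·x)/L(x) → 1` as `x → 0⁺`. -/
def SlowlyVaryingAtZero (L : ℝ → ℝ) : Prop :=
  ∀ l : ℝ, 0 < l → Tendsto (fun x : ℝ => L (l * x) / L x) (𝓝[>] 0) (𝓝 1)

lemma core_tendsto (r : ℝ → ℝ) (δ c m : ℝ) (hδ : 0 < δ) (hc : 1 < c) (hm : 0 < m)
    (hrδ : 0 < r δ)
    (hstep : ∀ x : ℝ, 0 < x → x ≤ δ → c * r x ≤ r (x / 2))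
    (hmid : ∀ x y : ℝ, 0 < x → x ≤ δ → x / 2 ≤ y → y ≤ x → m * r (x / 2) ≤ r y) :
    Tendsto r (𝓝[>] (0:ℝ)) atTop := by
  have hc0 : (0:ℝ) < c := lt_trans one_pos hc
  have hpow : ∀ n : ℕ, c ^ n * r δ ≤ r (δ / 2 ^ n) := by
    intro n
    induction n with
    | zero => simp
    | succ n ih =>
      have hx : (0:ℝ) < δ / 2 ^ n := by positivity
      have hxδ : δ / 2 ^ n ≤ δ := by
        apply div_le_self hδ.le
        exact one_le_pow₀ (by norm_num)
      have := hstep (δ / 2 ^ n) hx hxδ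
      have h2 : δ / 2 ^ n / 2 = δ / 2 ^ (n + 1) := by ring
      rw [h2] at this
      calc c ^ (n+1) * r δ = c * (c ^ n * r δ) := by ring
        _ ≤ c * r (δ / 2 ^ n) := by
            exact mul_le_mul_of_nonneg_left ih hc0.le
        _ ≤ r (δ / 2 ^ (n+1)) := this
  rw [tendsto_atTop]
  intro K
  -- choose N with m * (c ^ N * r δ) ≥ K
  obtain ⟨N, hN⟩ : ∃ N : ℕ, K / m / r δ ≤ c ^ N :=
    (tendsto_pow_atTop_atTop_of_one_lt hc).eventually_ge_atTop _ |>.exists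
  have hKN : K ≤ m * (c ^ N * r δ) := by
    have h1 : K / m / r δ * r δ ≤ c ^ N * r δ := mul_le_mul_of_nonneg_right hN hrδ.le
    rw [div_mul_cancel₀ _ hrδ.ne'] at h1
    have h2 : m * (K / m) ≤ m * (c ^ N * r δ) := mul_le_mul_of_nonneg_left h1 hm.le
    rwa [mul_div_cancel₀ _ hm.ne'] at h2
  have hmem : Ioc (0:ℝ) (δ / 2 ^ N) ∈ 𝓝[>] (0:ℝ) := by
    rw [mem_nhdsGT_iff_exists_Ioc_subset]
    exact ⟨δ / 2 ^ N, mem_Ioi.mpr (by positivity), subset_rfl⟩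
  filter_upwards [hmem] with y hy
  obtain ⟨hy0, hyN⟩ := hy
  -- find minimal n with δ / 2 ^ (n+1) < y
  have hex : ∃ n : ℕ, δ / 2 ^ (n + 1) < y := by
    obtain ⟨n, hn⟩ := pow_unbounded_of_one_lt (δ / y) (by norm_num : (1:ℝ) < 2)
    refine ⟨n, ?_⟩
    rw [div_lt_iff₀ (by positivity : (0:ℝ) < y)] at hn
    rw [div_lt_iff₀ (by positivity : (0:ℝ) < (2:ℝ) ^ (n+1))]
    calc δ < 2 ^ n * y := hn
      _ ≤ y * 2 ^ (n+1) := by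
          rw [mul_comm]
          exact mul_le_mul_of_nonneg_left (pow_le_pow_right₀ (by norm_num) (Nat.le_succ n)) hy0.le
  set n := Nat.find hex with hn_def
  have hn1 : δ / 2 ^ (n + 1) < y := Nat.find_spec hex
  have hn2 : y ≤ δ / 2 ^ n := by
    rcases Nat.eq_zero_or_pos n with h0 | hposn
    · rw [h0]
      calc y ≤ δ / 2 ^ N := hyN
        _ ≤ δ / 2 ^ 0 := by
            apply div_le_div_of_nonneg_left hδ.le (by positivity)
            exact one_le_pow₀ (by norm_num)
    · have hk : n - 1 < Nat.find hex := by omega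
      have h := Nat.find_min hex hk
      push_neg at h
      have heq : n - 1 + 1 = n := by omega
      rwa [heq] at h
  have hnN : N ≤ n + 1 := by
    by_contra h
    push_neg at h
    have : δ / 2 ^ N ≤ δ / 2 ^ (n + 1) := by
      apply div_le_div_of_nonneg_left hδ.le (by positivity)
      exact pow_le_pow_right₀ (by norm_num) (by omega)
    exact absurd (hyN.trans this) (not_le.mpr hn1)
  have hxpos : (0:ℝ) < δ / 2 ^ n := by positivity
  have hxδ : δ / 2 ^ n ≤ δ := div_le_self hδ.le (one_le_pow₀ (by norm_num))
  have hhalf : δ / 2 ^ n / 2 = δ / 2 ^ (n + 1) := by ring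
  have h1 : m * r (δ / 2 ^ n / 2) ≤ r y := by
    apply hmid (δ / 2 ^ n) y hxpos hxδ _ hn2
    rw [hhalf]; exact hn1.le
  rw [hhalf] at h1
  calc K ≤ m * (c ^ N * r δ) := hKN
    _ ≤ m * (c ^ (n+1) * r δ) := by
        apply mul_le_mul_of_nonneg_left _ hm.le
        exact mul_le_mul_of_nonneg_right (pow_le_pow_right₀ hc.le hnN) hrδ.le
    _ ≤ m * r (δ / 2 ^ (n+1)) := mul_le_mul_of_nonneg_left (hpow (n+1)) hm.le
    _ ≤ r y := h1

lemma half_tendsto : Tendsto (fun x : ℝ => x / 2) (𝓝[>] (0:ℝ)) (𝓝[>] (0:ℝ)) := by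
  apply tendsto_nhdsWithin_of_tendsto_nhds_of_eventually_within
  · have h : Tendsto (fun x : ℝ => x / 2) (𝓝 (0:ℝ)) (𝓝 ((0:ℝ) / 2)) :=
      (continuous_id.div_const 2).continuousAt
    simpa using h.mono_left nhdsWithin_le_nhds
  · filter_upwards [self_mem_nhdsWithin] with x hx
    exact div_pos (show (0:ℝ) < x from hx) two_pos

lemma ratio_tendsto_atTop (u v : ℝ → ℝ)
    (humono : ∀ x y : ℝ, 0 < x → x ≤ y → u x ≤ u y)
    (hvmono : ∀ x y : ℝ, 0 < x → x ≤ y → v x ≤ v y)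
    (hupos : ∀ᶠ x in 𝓝[>] (0:ℝ), 0 < u x)
    (hvpos : ∀ᶠ x in 𝓝[>] (0:ℝ), 0 < v x)
    (a b : ℝ) (hb : 0 < b) (hab : b < a)
    (hu2 : Tendsto (fun x => u (x / 2) / u x) (𝓝[>] (0:ℝ)) (𝓝 a))
    (hv2 : Tendsto (fun x => v (x / 2) / v x) (𝓝[>] (0:ℝ)) (𝓝 b)) :
    Tendsto (fun x => u x / v x) (𝓝[>] (0:ℝ)) atTop := by
  set c : ℝ := (a / b + 1) / 2 with hc_def
  have hab1 : 1 < a / b := (one_lt_div hb).mpr hab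
  have hc1 : 1 < c := by rw [hc_def]; linarith
  have hcab : c < a / b := by rw [hc_def]; linarith
  set m : ℝ := b / 2 with hm_def
  have hm : 0 < m := by positivity
  have hq : Tendsto (fun x => u (x / 2) / u x / (v (x / 2) / v x)) (𝓝[>] (0:ℝ))
      (𝓝 (a / b)) := hu2.div hv2 hb.ne'
  have hE : ∀ᶠ x in 𝓝[>] (0:ℝ), 0 < u x ∧ 0 < v x ∧ 0 < u (x / 2) ∧ 0 < v (x / 2) ∧
      c ≤ u (x / 2) / u x / (v (x / 2) / v x) ∧ m ≤ v (x / 2) / v x := by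
    filter_upwards [hupos, hvpos, half_tendsto.eventually hupos,
      half_tendsto.eventually hvpos, hq.eventually (eventually_gt_nhds hcab),
      hv2.eventually (eventually_gt_nhds (half_lt_self hb))]
      with x h1 h2 h3 h4 h5 h6
    exact ⟨h1, h2, h3, h4, h5.le, h6.le⟩
  obtain ⟨δ, hδ0, hsub⟩ := mem_nhdsGT_iff_exists_Ioc_subset.mp hE
  rw [mem_Ioi] at hδ0
  have hP : ∀ x ∈ Ioc (0:ℝ) δ, 0 < u x ∧ 0 < v x ∧ 0 < u (x / 2) ∧ 0 < v (x / 2) ∧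
      c ≤ u (x / 2) / u x / (v (x / 2) / v x) ∧ m ≤ v (x / 2) / v x := fun x hx => hsub hx
  apply core_tendsto _ δ c m hδ0 hc1 hm
  · obtain ⟨h1, h2, -⟩ := hP δ ⟨hδ0, le_rfl⟩
    exact div_pos h1 h2
  · intro x hx0 hxδ
    obtain ⟨h1, h2, h3, h4, h5, -⟩ := hP x ⟨hx0, hxδ⟩
    have hr : 0 < u x / v x := div_pos h1 h2
    have key : u (x / 2) / u x / (v (x / 2) / v x) = u (x / 2) / v (x / 2) / (u x / v x) :=
      div_div_div_comm _ _ _ _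
    rw [key] at h5
    exact (le_div_iff₀ hr).mp h5
  · intro x y hx0 hxδ hxy hyx
    obtain ⟨h1, h2, h3, h4, -, h6⟩ := hP x ⟨hx0, hxδ⟩
    have hy0 : 0 < y := lt_of_lt_of_le (by positivity) hxy
    obtain ⟨hy1, hy2, -⟩ := hP y ⟨hy0, hyx.trans hxδ⟩
    have step1 : m * (u (x / 2) / v (x / 2)) ≤ (v (x / 2) / v x) * (u (x / 2) / v (x / 2)) :=
      mul_le_mul_of_nonneg_right h6 (div_nonneg h3.le h4.le)
    have step2 : (v (x / 2) / v x) * (u (x / 2) / v (x / 2)) = u (x / 2) / v x := by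
      field_simp
    have step3 : u (x / 2) / v x ≤ u y / v y := by
      apply div_le_div₀ hy1.le (humono _ _ (by positivity) hxy) hy2
      exact hvmono _ _ hy0 hyx
    calc m * (u (x / 2) / v (x / 2)) ≤ u (x / 2) / v x := by rw [← step2]; exact step1
      _ ≤ u y / v y := step3

lemma half_ratio (rho : ℝ) (L : ℝ → ℝ) (hLpos : ∀ x : ℝ, 0 < x → 0 < L x)
    (hLsv : SlowlyVaryingAtZero L) (u : ℝ → ℝ)
    (hu : Tendsto (fun x : ℝ => u x / (x ^ rho * L x)) (𝓝[>] (0:ℝ)) (𝓝 1)) :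
    Tendsto (fun x : ℝ => u (x / 2) / u x) (𝓝[>] (0:ℝ)) (𝓝 ((1/2 : ℝ) ^ rho)) := by
  have hfratio : Tendsto
      (fun x : ℝ => ((x / 2) ^ rho * L (x / 2)) / (x ^ rho * L x)) (𝓝[>] (0:ℝ))
      (𝓝 ((1/2 : ℝ) ^ rho)) := by
    have h1 : Tendsto (fun x : ℝ => (1/2 : ℝ) ^ rho * (L ((1/2 : ℝ) * x) / L x))
        (𝓝[>] (0:ℝ)) (𝓝 ((1/2 : ℝ) ^ rho * 1)) :=
      (hLsv (1/2) (by norm_num)).const_mul _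
    rw [mul_one] at h1
    apply h1.congr'
    filter_upwards [self_mem_nhdsWithin] with x hx
    rw [mem_Ioi] at hx
    have hxr : (0:ℝ) < x ^ rho := Real.rpow_pos_of_pos hx rho
    have hLx : L x ≠ 0 := (hLpos x hx).ne'
    have hx2 : x / 2 = (1/2 : ℝ) * x := by ring
    rw [hx2, Real.mul_rpow (by norm_num) hx.le]
    field_simp
  have hinv : Tendsto (fun x : ℝ => (u x / (x ^ rho * L x))⁻¹) (𝓝[>] (0:ℝ)) (𝓝 1) := by
    have := hu.inv₀ one_ne_zero
    simpa using this
  have hcomp : Tendsto (fun x : ℝ => u (x / 2) / ((x / 2) ^ rho * L (x / 2)))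
      (𝓝[>] (0:ℝ)) (𝓝 1) := hu.comp half_tendsto
  have hall := (hcomp.mul hfratio).mul hinv
  rw [one_mul, mul_one] at hall
  apply hall.congr'
  filter_upwards [self_mem_nhdsWithin] with x hx
  rw [mem_Ioi] at hx
  have hx2 : (0:ℝ) < x / 2 := by positivity
  have hf2 : (0:ℝ) < (x / 2) ^ rho * L (x / 2) :=
    mul_pos (Real.rpow_pos_of_pos hx2 rho) (hLpos _ hx2)
  have hf : (0:ℝ) < x ^ rho * L x :=
    mul_pos (Real.rpow_pos_of_pos hx rho) (hLpos _ hx)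
  rcases eq_or_ne (u x) 0 with h0 | h0
  · simp [h0, div_zero]
  · field_simp
    rw [mul_assoc, mul_div_assoc, div_self (mul_ne_zero (hLpos _ hx2).ne' (hLpos _ hx).ne'), mul_one]

/-- first limit case of Lemma 4.1 of the paper. If `ρ̂ > ρ` then
`(Ψ(x) − Ψ̂(x))/(x^ρ̂ L̂(x)) → +∞` as `x → 0⁺`. -/
theorem Psi_diff_tendsto_atTop_of_rhoh_gt_rho
    (rho rhoh : ℝ) (hrho : rho ∈ Set.Ioo (0:ℝ) 1) (hrhoh : rhoh ∈ Set.Ioo (0:ℝ) 1)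
    (hlt : rho < rhoh)
    (C Ch : ℝ) (hC : 0 < C) (hCh : 0 < Ch)
    (alpha beta alphah betah : ℝ)
    (U Uh : Measure ℝ) [IsLocallyFiniteMeasure U] [IsLocallyFiniteMeasure Uh]
    (hU0 : U (Set.Iio 0) = 0) (hUh0 : Uh (Set.Iio 0) = 0)
    (L Lh : ℝ → ℝ)
    (hLpos : ∀ x : ℝ, 0 < x → 0 < L x) (hLhpos : ∀ x : ℝ, 0 < x → 0 < Lh x)
    (hLsv : SlowlyVaryingAtZero L) (hLhsv : SlowlyVaryingAtZero Lh)
    (hU : Tendsto (fun x : ℝ => (U (Set.Icc 0 x)).toReal / (x ^ rho * L x))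
      (𝓝[>] 0) (𝓝 1))
    (hUh : Tendsto (fun x : ℝ => (Uh (Set.Icc 0 x)).toReal / (x ^ rhoh * Lh x))
      (𝓝[>] 0) (𝓝 1))
    (Psi Psih : ℝ → ℝ)
    (hPsi : ∀ x : ℝ, Psi x = C * ∫ y in Set.Icc 0 x, Real.exp ((alpha - beta) * y) ∂U)
    (hPsih : ∀ x : ℝ,
      Psih x = Ch * ∫ y in Set.Icc 0 x, Real.exp ((alphah - betah) * y) ∂Uh) :
    Tendsto (fun x : ℝ => (Psi x - Psih x) / (x ^ rhoh * Lh x)) (𝓝[>] 0) atTop := by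
  set u : ℝ → ℝ := fun x => (U (Set.Icc 0 x)).toReal with hu_def
  set v : ℝ → ℝ := fun x => (Uh (Set.Icc 0 x)).toReal with hv_def
  have hufin : ∀ x : ℝ, U (Set.Icc 0 x) ≠ ⊤ := fun x => isCompact_Icc.measure_lt_top.ne
  have hvfin : ∀ x : ℝ, Uh (Set.Icc 0 x) ≠ ⊤ := fun x => isCompact_Icc.measure_lt_top.ne
  have humono : ∀ x y : ℝ, 0 < x → x ≤ y → u x ≤ u y := fun x y _ hxy =>
    ENNReal.toReal_mono (hufin y) (measure_mono (Icc_subset_Icc le_rfl hxy))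
  have hvmono : ∀ x y : ℝ, 0 < x → x ≤ y → v x ≤ v y := fun x y _ hxy =>
    ENNReal.toReal_mono (hvfin y) (measure_mono (Icc_subset_Icc le_rfl hxy))
  have hU' : Tendsto (fun x : ℝ => u x / (x ^ rho * L x)) (𝓝[>] (0:ℝ)) (𝓝 1) := hU
  have hUh' : Tendsto (fun x : ℝ => v x / (x ^ rhoh * Lh x)) (𝓝[>] (0:ℝ)) (𝓝 1) := hUh
  have hupos : ∀ᶠ x in 𝓝[>] (0:ℝ), 0 < u x := by
    filter_upwards [hU'.eventually (eventually_gt_nhds one_half_lt_one), self_mem_nhdsWithin]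
      with x hx1 hx2
    rw [mem_Ioi] at hx2
    have hf : (0:ℝ) < x ^ rho * L x :=
      mul_pos (Real.rpow_pos_of_pos hx2 rho) (hLpos x hx2)
    have h0 : (0:ℝ) < u x / (x ^ rho * L x) := lt_trans (by norm_num) hx1
    have := mul_pos h0 hf
    rwa [div_mul_cancel₀ _ hf.ne'] at this
  have hvpos : ∀ᶠ x in 𝓝[>] (0:ℝ), 0 < v x := by
    filter_upwards [hUh'.eventually (eventually_gt_nhds one_half_lt_one), self_mem_nhdsWithin]
      with x hx1 hx2
    rw [mem_Ioi] at hx2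
    have hf : (0:ℝ) < x ^ rhoh * Lh x :=
      mul_pos (Real.rpow_pos_of_pos hx2 rhoh) (hLhpos x hx2)
    have h0 : (0:ℝ) < v x / (x ^ rhoh * Lh x) := lt_trans (by norm_num) hx1
    have := mul_pos h0 hf
    rwa [div_mul_cancel₀ _ hf.ne'] at this
  have hu2 := half_ratio rho L hLpos hLsv u hU'
  have hv2 := half_ratio rhoh Lh hLhpos hLhsv v hUh'
  have hb : (0:ℝ) < (1/2 : ℝ) ^ rhoh := Real.rpow_pos_of_pos (by norm_num) _
  have hab : (1/2 : ℝ) ^ rhoh < (1/2 : ℝ) ^ rho :=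
    Real.rpow_lt_rpow_of_exponent_gt (by norm_num) (by norm_num) hlt
  have key : Tendsto (fun x : ℝ => u x / v x) (𝓝[>] (0:ℝ)) atTop :=
    ratio_tendsto_atTop u v humono hvmono hupos hvpos _ _ hb hab hu2 hv2
  have hug : Tendsto (fun x : ℝ => u x / (x ^ rhoh * Lh x)) (𝓝[>] (0:ℝ)) atTop := by
    have h1 : Tendsto (fun x : ℝ => (u x / v x) * (v x / (x ^ rhoh * Lh x)))
        (𝓝[>] (0:ℝ)) atTop := key.atTop_mul_pos one_pos hUh'
    apply h1.congr'
    filter_upwards [hvpos, self_mem_nhdsWithin] with x hv0 hx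
    rw [mem_Ioi] at hx
    have hf : (0:ℝ) < x ^ rhoh * Lh x :=
      mul_pos (Real.rpow_pos_of_pos hx rhoh) (hLhpos x hx)
    field_simp
  set M : ℝ := |alpha - beta| with hM_def
  set Mh : ℝ := |alphah - betah| with hMh_def
  have hlowPsi : ∀ x : ℝ, 0 < x → x ≤ 1 → C * (Real.exp (-M) * u x) ≤ Psi x := by
    intro x hx0 hx1
    rw [hPsi x]
    apply mul_le_mul_of_nonneg_left _ hC.le
    have hint : IntegrableOn (fun y : ℝ => Real.exp ((alpha - beta) * y)) (Set.Icc 0 x) U :=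
      (Real.continuous_exp.comp (continuous_const.mul continuous_id)).continuousOn.integrableOn_compact
        isCompact_Icc
    have hpt : ∀ y ∈ Set.Icc (0:ℝ) x, Real.exp (-M) ≤ Real.exp ((alpha - beta) * y) := by
      intro y hy
      apply Real.exp_le_exp.mpr
      have h1 : |(alpha - beta) * y| ≤ M := by
        rw [abs_mul, hM_def]
        calc |alpha - beta| * |y| ≤ |alpha - beta| * 1 := by
              apply mul_le_mul_of_nonneg_left _ (abs_nonneg _)
              rw [abs_le]
              exact ⟨by linarith [hy.1], le_trans hy.2 hx1⟩
          _ = |alpha - beta| := mul_one _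
      linarith [neg_abs_le ((alpha - beta) * y)]
    have := setIntegral_ge_of_const_le_real measurableSet_Icc (hufin x) hpt hint
    calc Real.exp (-M) * u x = Real.exp (-M) * (U (Set.Icc 0 x)).toReal := rfl
      _ ≤ ∫ y in Set.Icc 0 x, Real.exp ((alpha - beta) * y) ∂U := this
  have hupPsih : ∀ x : ℝ, 0 < x → x ≤ 1 → Psih x ≤ Ch * (Real.exp Mh * v x) := by
    intro x hx0 hx1
    rw [hPsih x]
    apply mul_le_mul_of_nonneg_left _ hCh.le
    have hpt : ∀ y ∈ Set.Icc (0:ℝ) x, ‖Real.exp ((alphah - betah) * y)‖ ≤ Real.exp Mh := by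
      intro y hy
      rw [Real.norm_eq_abs, abs_of_pos (Real.exp_pos _)]
      apply Real.exp_le_exp.mpr
      have h1 : |(alphah - betah) * y| ≤ Mh := by
        rw [abs_mul, hMh_def]
        calc |alphah - betah| * |y| ≤ |alphah - betah| * 1 := by
              apply mul_le_mul_of_nonneg_left _ (abs_nonneg _)
              rw [abs_le]
              exact ⟨by linarith [hy.1], le_trans hy.2 hx1⟩
          _ = |alphah - betah| := mul_one _
      linarith [le_abs_self ((alphah - betah) * y)]
    have hmeas : AEStronglyMeasurable (fun y : ℝ => Real.exp ((alphah - betah) * y))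
        ((Uh).restrict (Set.Icc 0 x)) :=
      (Real.continuous_exp.comp (continuous_const.mul continuous_id)).aestronglyMeasurable
    have hnorm := norm_setIntegral_le_of_norm_le_const (lt_top_iff_ne_top.mpr (hvfin x)) hpt
    calc (∫ y in Set.Icc 0 x, Real.exp ((alphah - betah) * y) ∂Uh)
        ≤ ‖∫ y in Set.Icc 0 x, Real.exp ((alphah - betah) * y) ∂Uh‖ := le_abs_self _
      _ ≤ Real.exp Mh * (Uh (Set.Icc 0 x)).toReal := hnorm
      _ = Real.exp Mh * v x := rfl
  have hterm2 : Tendsto (fun x : ℝ => Ch * Real.exp Mh * (v x / (x ^ rhoh * Lh x)))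
      (𝓝[>] (0:ℝ)) (𝓝 (Ch * Real.exp Mh * 1)) := hUh'.const_mul _
  have hterm1 : Tendsto (fun x : ℝ => C * Real.exp (-M) * (u x / (x ^ rhoh * Lh x)))
      (𝓝[>] (0:ℝ)) atTop := hug.const_mul_atTop (by positivity)
  have hlim : Tendsto (fun x : ℝ => C * Real.exp (-M) * (u x / (x ^ rhoh * Lh x))
      - Ch * Real.exp Mh * (v x / (x ^ rhoh * Lh x))) (𝓝[>] (0:ℝ)) atTop := by
    simp only [sub_eq_add_neg]
    exact hterm1.atTop_add hterm2.neg
  apply tendsto_atTop_mono' _ _ hlim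
  have hmem1 : Set.Ioc (0:ℝ) 1 ∈ 𝓝[>] (0:ℝ) := by
    rw [mem_nhdsGT_iff_exists_Ioc_subset]
    exact ⟨1, mem_Ioi.mpr one_pos, subset_rfl⟩
  filter_upwards [hmem1] with x hx
  obtain ⟨hx0, hx1⟩ := hx
  have hg : (0:ℝ) < x ^ rhoh * Lh x :=
    mul_pos (Real.rpow_pos_of_pos hx0 rhoh) (hLhpos x hx0)
  have hnum : C * (Real.exp (-M) * u x) - Ch * (Real.exp Mh * v x) ≤ Psi x - Psih x :=
    sub_le_sub (hlowPsi x hx0 hx1) (hupPsih x hx0 hx1)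
  calc C * Real.exp (-M) * (u x / (x ^ rhoh * Lh x))
        - Ch * Real.exp Mh * (v x / (x ^ rhoh * Lh x))
      = (C * (Real.exp (-M) * u x) - Ch * (Real.exp Mh * v x)) / (x ^ rhoh * Lh x) := by
        rw [sub_div]; ring
    _ ≤ (Psi x - Psih x) / (x ^ rhoh * Lh x) := by gcongr
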